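/- For a regular point λ of (A, j), let the defect number d(λ) be the Hilbert-space (orthogonal) dimension of the orthogonal complement in F of the closed subspace range(A − λj). Then d is locally constant on the set of regular points: for every regular point λ₀ there exists ε > 0 such that every λ with |λ − λ₀| < ε is a regular point and d(λ) = d(λ₀); consequently d is constant on each connected component of the open set of regular points. -/

import Mathlib

variable {E F : Type*} [NormedAddCommGroup E] [InnerProductSpace ℂ E] [CompleteSpace E]
  [NormedAddCommGroup F] [InnerProductSpace ℂ F] [CompleteSpace F]

/-- `λ` is a regular point for `(A, j)`. -/
def IsRegularPoint (j A : E →L[ℂ] F) (lam : ℂ) : Prop :=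
  ∃ c : ℝ, 0 < c ∧ ∀ f : E, c * ‖f‖ ≤ ‖(A - lam • j) f‖

/-- The defect number of `(A, j)` at `λ`: the dimension of the orthogonal complement in `F`
of the range of `A - λj` (which is a closed subspace when `λ` is a regular point). -/
noncomputable def defectNumber (j A : E →L[ℂ] F) (lam : ℂ) : Cardinal :=
  Module.rank ℂ ↥((LinearMap.range ((A - lam • j) : E →L[ℂ] F).toLinearMap)ᗮ)

/-- If every vector of `Mᗮ` lying in the complete subspace `N` is zero, then
`rank Mᗮ ≤ rank Nᗮ`. -/
lemma rank_orthogonal_le_of_inter (M N : Submodule ℂ F) [CompleteSpace N]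
    (h : ∀ x ∈ Mᗮ, x ∈ N → x = 0) :
    Module.rank ℂ ↥Mᗮ ≤ Module.rank ℂ ↥Nᗮ := by
  haveI : CompleteSpace ↥Nᗮ := (Submodule.isClosed_orthogonal N).completeSpace_coe
  let L : ↥Mᗮ →ₗ[ℂ] ↥Nᗮ :=
    (Submodule.orthogonalProjectionOnto Nᗮ).toLinearMap.comp (Mᗮ).subtype
  have hLinj : Function.Injective L := by
    rw [← LinearMap.ker_eq_bot, LinearMap.ker_eq_bot']
    intro x hx
    have hx0 : Submodule.orthogonalProjectionOnto Nᗮ (x : F) = 0 := hx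
    rw [Submodule.orthogonalProjectionOnto_eq_zero_iff, Submodule.orthogonal_orthogonal] at hx0
    exact Subtype.ext (h x x.2 hx0)
  exact L.rank_le_of_injective hLinj

/-- The range of a bounded-below continuous linear map is closed. -/
lemma isClosed_range_clm (T : E →L[ℂ] F) (c : ℝ) (hc : 0 < c)
    (hreg : ∀ f : E, c * ‖f‖ ≤ ‖T f‖) :
    IsClosed ((LinearMap.range (T : E →L[ℂ] F).toLinearMap : Submodule ℂ F) : Set F) := by
  have hanti : AntilipschitzWith (⟨c, hc.le⟩ : NNReal)⁻¹ T := by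
    apply T.antilipschitz_of_bound
    intro x
    show ‖x‖ ≤ c⁻¹ * ‖T x‖
    rw [inv_mul_eq_div, le_div_iff₀ hc, mul_comm]
    exact hreg x
  have := hanti.isClosed_range T.uniformContinuous
  simpa [LinearMap.coe_range] using this

/-- Key comparison: if `lam` is a regular point with constant `c` and `μ` is close enough
to `lam`, then the defect number at `μ` is at most the defect number at `lam`. -/
lemma defect_le_aux (j A : E →L[ℂ] F) (μ lam : ℂ) (c : ℝ) (hc : 0 < c)
    (hreg : ∀ f : E, c * ‖f‖ ≤ ‖(A - lam • j) f‖)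
    (hclose : ‖μ - lam‖ * (‖j‖ + 1) < c) :
    defectNumber j A μ ≤ defectNumber j A lam := by
  haveI : CompleteSpace (LinearMap.range ((A - lam • j) : E →L[ℂ] F).toLinearMap) :=
    (isClosed_range_clm _ c hc hreg).completeSpace_coe
  apply rank_orthogonal_le_of_inter
  rintro x hxM ⟨f, hf⟩
  have hf' : (A - lam • j) f = x := hf
  have hxM' : (inner ℂ ((A - μ • j) f) x : ℂ) = 0 :=
    (Submodule.mem_orthogonal _ x).mp hxM _ ⟨f, rfl⟩
  have hdiff : (A - lam • j) f - (A - μ • j) f = (μ - lam) • j f := by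
    simp only [ContinuousLinearMap.sub_apply, ContinuousLinearMap.smul_apply, sub_smul]
    abel
  have hsplit : (inner ℂ x x : ℂ) = inner ℂ ((μ - lam) • j f) x := by
    calc (inner ℂ x x : ℂ) = inner ℂ ((A - lam • j) f) x := by rw [hf']
      _ = inner ℂ ((A - μ • j) f + (μ - lam) • j f) x := by rw [← hdiff, add_sub_cancel]
      _ = inner ℂ ((A - μ • j) f) x + inner ℂ ((μ - lam) • j f) x := inner_add_left _ _ _
      _ = inner ℂ ((μ - lam) • j f) x := by rw [hxM', zero_add]
  have h1 : ‖x‖ ^ 2 ≤ ‖μ - lam‖ * (‖j‖ * ‖f‖) * ‖x‖ := by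
    have hle := norm_inner_le_norm (𝕜 := ℂ) ((μ - lam) • j f) x
    rw [← hsplit] at hle
    have hn : ‖(inner ℂ x x : ℂ)‖ = ‖x‖ ^ 2 := by
      rw [inner_self_eq_norm_sq_to_K]
      simp [norm_pow]
    rw [hn, norm_smul] at hle
    refine hle.trans ?_
    exact mul_le_mul_of_nonneg_right
      (mul_le_mul_of_nonneg_left (j.le_opNorm f) (norm_nonneg (μ - lam))) (norm_nonneg x)
  have h2 : c * ‖f‖ ≤ ‖x‖ := by rw [← hf']; exact hreg f
  have hx00 : ‖x‖ = 0 := by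
    by_contra hne
    have hX : 0 < ‖x‖ := lt_of_le_of_ne (norm_nonneg x) (Ne.symm hne)
    rcases (norm_nonneg f).eq_or_lt with hf0 | hf0
    · rw [← hf0] at h1
      simp only [mul_zero, zero_mul] at h1
      nlinarith
    · nlinarith [mul_le_mul_of_nonneg_right h2 hX.le,
        mul_lt_mul_of_pos_right hclose (mul_pos hf0 hX),
        mul_nonneg (mul_nonneg (norm_nonneg (μ - lam)) hf0.le) hX.le]
  exact norm_eq_zero.mp hx00

/-- The defect number is locally constant on the open set of regular points of `(A, j)`;
consequently it is constant on each connected component of that set. -/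
theorem defectNumber_locallyConstant_on_regular_points
    (j : E →L[ℂ] F) (hj_inj : Function.Injective j) (hj_dense : DenseRange j)
    (A : E →L[ℂ] F) :
    (∀ lam₀ : ℂ, IsRegularPoint j A lam₀ →
      ∃ ε : ℝ, 0 < ε ∧ ∀ lam : ℂ, ‖lam - lam₀‖ < ε →
        IsRegularPoint j A lam ∧ defectNumber j A lam = defectNumber j A lam₀) ∧
    (∀ s : Set ℂ, IsPreconnected s → (∀ lam ∈ s, IsRegularPoint j A lam) →
      ∀ lam₁ ∈ s, ∀ lam₂ ∈ s, defectNumber j A lam₁ = defectNumber j A lam₂) := by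
  have hj1 : (0 : ℝ) < ‖j‖ + 1 := by positivity
  have main : ∀ lam₀ : ℂ, IsRegularPoint j A lam₀ →
      ∃ ε : ℝ, 0 < ε ∧ ∀ lam : ℂ, ‖lam - lam₀‖ < ε →
        IsRegularPoint j A lam ∧ defectNumber j A lam = defectNumber j A lam₀ := by
    rintro lam₀ ⟨c, hc, hreg⟩
    refine ⟨c / (2 * (‖j‖ + 1)), by positivity, ?_⟩
    intro lam hlam
    have hd : ‖lam - lam₀‖ * (‖j‖ + 1) < c / 2 := by
      have h := mul_lt_mul_of_pos_right hlam hj1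
      have he : c / (2 * (‖j‖ + 1)) * (‖j‖ + 1) = c / 2 := by
        field_simp
      rwa [he] at h
    -- regularity of lam with constant c/2
    have hreg' : ∀ f : E, c / 2 * ‖f‖ ≤ ‖(A - lam • j) f‖ := by
      intro f
      have e : (A - lam₀ • j) f = (A - lam • j) f + (lam - lam₀) • j f := by
        simp only [ContinuousLinearMap.sub_apply, ContinuousLinearMap.smul_apply, sub_smul]
        abel
      have hb : ‖(A - lam₀ • j) f‖ ≤ ‖(A - lam • j) f‖ + ‖lam - lam₀‖ * (‖j‖ * ‖f‖) := by
        rw [e]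
        refine (norm_add_le _ _).trans ?_
        gcongr
        rw [norm_smul]
        exact mul_le_mul_of_nonneg_left (j.le_opNorm f) (norm_nonneg (lam - lam₀))
      have h0 := hreg f
      have hsmall : ‖lam - lam₀‖ * (‖j‖ * ‖f‖) ≤ c / 2 * ‖f‖ := by
        have : ‖lam - lam₀‖ * ‖j‖ ≤ c / 2 := by
          nlinarith [norm_nonneg (lam - lam₀)]
        nlinarith [norm_nonneg f, norm_nonneg (lam - lam₀), norm_nonneg j]
      linarith
    refine ⟨⟨c / 2, by positivity, hreg'⟩, le_antisymm ?_ ?_⟩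
    · exact defect_le_aux j A lam lam₀ c hc hreg (hd.trans_le (by linarith))
    · refine defect_le_aux j A lam₀ lam (c / 2) (by positivity) hreg' ?_
      rwa [norm_sub_rev] at hd
  refine ⟨main, ?_⟩
  intro s hs hregs lam₁ hm1 lam₂ hm2
  classical
  choose! ε hε hball using main
  by_contra hne
  set d := defectNumber j A with hdd
  let u : Set ℂ := ⋃ l ∈ {l ∈ s | d l = d lam₁}, Metric.ball l (ε l)
  let v : Set ℂ := ⋃ l ∈ {l ∈ s | d l ≠ d lam₁}, Metric.ball l (ε l)
  have hu : IsOpen u := isOpen_biUnion (fun _ _ => Metric.isOpen_ball)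
  have hv : IsOpen v := isOpen_biUnion (fun _ _ => Metric.isOpen_ball)
  have hmem : ∀ l ∈ s, l ∈ Metric.ball l (ε l) :=
    fun l hl => Metric.mem_ball_self (hε l (hregs l hl))
  have hsub : s ⊆ u ∪ v := by
    intro l hl
    by_cases h : d l = d lam₁
    · exact Or.inl (Set.mem_biUnion ⟨hl, h⟩ (hmem l hl))
    · exact Or.inr (Set.mem_biUnion ⟨hl, h⟩ (hmem l hl))
  have hne' : (s ∩ u).Nonempty :=
    ⟨lam₁, hm1, Set.mem_biUnion ⟨hm1, rfl⟩ (hmem lam₁ hm1)⟩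
  have hne'' : (s ∩ v).Nonempty :=
    ⟨lam₂, hm2, Set.mem_biUnion ⟨hm2, fun h => hne h.symm⟩ (hmem lam₂ hm2)⟩
  obtain ⟨μ, -, hμu, hμv⟩ := hs u v hu hv hsub hne' hne''
  obtain ⟨l, ⟨hls, hl1⟩, hμl⟩ := Set.mem_iUnion₂.mp hμu
  obtain ⟨l', ⟨hls', hl1'⟩, hμl'⟩ := Set.mem_iUnion₂.mp hμv
  have hdμl : d μ = d l :=
    (hball l (hregs l hls) μ (mem_ball_iff_norm.mp (by assumption))).2
  have hdμl' : d μ = d l' :=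
    (hball l' (hregs l' hls') μ (mem_ball_iff_norm.mp (by assumption))).2
  exact hl1' (by rw [← hdμl', hdμl, hl1])
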